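/- Let S be a set of size 2d with d ≥ 1, partitioned as S = {p, q_1, …, q_{d−1}} ∪ {r_1, …, r_d}, and let ι = {p, q_1, …, q_{d−1}}. Define R = {σ ⊆ S : if {q_1,…,q_{d−1}} ⊆ σ then σ ⊆ ι}. Then the full simplex 2^S d-collapses to R by collapsing the liberation faces λ_i = {q_1,…,q_{d−1}, r_i}, i = 1,…,d, in any order. -/

import Mathlib

open Finset

variable {V : Type*} [DecidableEq V]

/-- An (abstract, finite) simplicial complex: a set system closed under taking subsets. -/
def IsComplex (K : Finset (Finset V)) : Prop :=
  ∀ σ ∈ K, ∀ τ ⊆ σ, τ ∈ K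

/-- `τ` is the unique maximal face of `K` containing `σ`. -/
def IsTau (K : Finset (Finset V)) (σ τ : Finset V) : Prop :=
  σ ∈ K ∧ τ ∈ K ∧ σ ⊆ τ ∧ ∀ η ∈ K, σ ⊆ η → η ⊆ τ

/-- `σ` is a `d`-collapsible face of `K`: `dim σ ≤ d - 1` (i.e. `σ.card ≤ d`) and `σ`
is contained in a unique maximal face of `K`. -/
def DCollFace (d : ℕ) (K : Finset (Finset V)) (σ : Finset V) : Prop :=
  σ.card ≤ d ∧ ∃ τ, IsTau K σ τ

/-- The result `K_σ` of the elementary collapse at `σ`: all faces containing `σ` are removed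
(they all lie between `σ` and `τ(σ)`). -/
def collapseAt (K : Finset (Finset V)) (σ : Finset V) : Finset (Finset V) :=
  K.filter (fun η => ¬ σ ⊆ η)

/-- One elementary `d`-collapse. -/
def ElemCollapse (d : ℕ) (K K' : Finset (Finset V)) : Prop :=
  ∃ σ, DCollFace d K σ ∧ K' = collapseAt K σ

/-- `K` `d`-collapses to `L`. -/
def CollapsesTo (d : ℕ) (K L : Finset (Finset V)) : Prop :=
  Relation.ReflTransGen (ElemCollapse d) K L

/-- `K` is `d`-collapsible. -/
def DCollapsible (d : ℕ) (K : Finset (Finset V)) : Prop :=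
  CollapsesTo d K ∅

/-- Result of successively collapsing the faces in the list `L`. -/
def collapseList (K : Finset (Finset V)) (L : List (Finset V)) : Finset (Finset V) :=
  L.foldl collapseAt K

/-- `L` is a valid sequence of elementary `d`-collapses starting at `K`. -/
def IsCollapseSeq (d : ℕ) (K : Finset (Finset V)) (L : List (Finset V)) : Prop :=
  ∀ (i : ℕ) (h : i < L.length), DCollFace d (collapseList K (L.take i)) (L.get ⟨i, h⟩)

/-- Let `S = ι ∪ ρ` where `ι = {p, q_1, …, q_{d-1}}` and `ρ = {r_1, …, r_d}` are disjoint
`d`-element sets, and let `β = ι \ {p} = {q_1, …, q_{d-1}}`. Set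
`R = {σ ⊆ S : β ⊆ σ → σ ⊆ ι}`. Then the full simplex `2^S` `d`-collapses to `R` by
collapsing the liberation faces `λ_r = β ∪ {r}`, `r ∈ ρ`, in any order. -/
lemma collapseList_filter (K : Finset (Finset V)) (L : List (Finset V)) :
    collapseList K L = K.filter (fun η => ∀ σ ∈ L, ¬ σ ⊆ η) := by
  induction L generalizing K with
  | nil => simp [collapseList]
  | cons σ L ih =>
      show collapseList (collapseAt K σ) L = _
      rw [ih, collapseAt, Finset.filter_filter]
      apply Finset.filter_congr
      intro η _
      simp [List.forall_mem_cons]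

lemma collapsesTo_of_seq (d : ℕ) (K : Finset (Finset V)) (L : List (Finset V))
    (h : IsCollapseSeq d K L) : CollapsesTo d K (collapseList K L) := by
  induction L generalizing K with
  | nil => exact Relation.ReflTransGen.refl
  | cons σ L ih =>
      have h0 : DCollFace d K σ := by
        have := h 0 (by simp)
        simpa [collapseList] using this
      have hrest : IsCollapseSeq d (collapseAt K σ) L := by
        intro i hi
        have := h (i + 1) (by simpa using Nat.succ_lt_succ hi)
        simpa [collapseList, List.take_succ_cons] using this
      have heq : collapseList K (σ :: L) = collapseList (collapseAt K σ) L := rfl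
      rw [heq]
      exact Relation.ReflTransGen.head ⟨σ, h0, rfl⟩ (ih _ hrest)

theorem stmt10 (d : ℕ) (hd : 1 ≤ d) (ι ρ : Finset V)
    (hι : ι.card = d) (hρ : ρ.card = d) (hdisj : Disjoint ι ρ) (p : V) (hp : p ∈ ι)
    (Lr : List V) (hnodup : Lr.Nodup) (henum : Lr.toFinset = ρ) :
    IsCollapseSeq d ((ι ∪ ρ).powerset) (Lr.map (fun r => insert r (ι.erase p))) ∧
    collapseList ((ι ∪ ρ).powerset) (Lr.map (fun r => insert r (ι.erase p)))
      = ((ι ∪ ρ).powerset).filter (fun σ => ι.erase p ⊆ σ → σ ⊆ ι) ∧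
    CollapsesTo d ((ι ∪ ρ).powerset)
      (((ι ∪ ρ).powerset).filter (fun σ => ι.erase p ⊆ σ → σ ⊆ ι)) := by
  set β := ι.erase p with hβ
  set S := ι ∪ ρ with hS
  have hβι : β ⊆ ι := Finset.erase_subset _ _
  have hβcard : β.card = d - 1 := by rw [hβ, Finset.card_erase_of_mem hp, hι]
  have hrβ : ∀ r ∈ ρ, r ∉ β := fun r hr hmem =>
    Finset.disjoint_left.mp hdisj (hβι hmem) hr
  have hmemρ : ∀ r, r ∈ Lr ↔ r ∈ ρ := fun r => by rw [← henum, List.mem_toFinset]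
  have hinscard : ∀ r ∈ ρ, (insert r β).card = d := by
    intro r hr
    rw [Finset.card_insert_of_notMem (hrβ r hr), hβcard]
    omega
  -- membership in the intermediate complexes
  have hKmem : ∀ (M : List V) (η : Finset V),
      η ∈ collapseList S.powerset (M.map (fun r => insert r β)) ↔
        η ⊆ S ∧ ∀ r ∈ M, ¬ insert r β ⊆ η := by
    intro M η
    rw [collapseList_filter, Finset.mem_filter, Finset.mem_powerset]
    simp
  -- the collapse sequence is valid
  have hseq : IsCollapseSeq d S.powerset (Lr.map (fun r => insert r β)) := by
    intro i hi
    have hi' : i < Lr.length := by simpa using hi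
    set r : V := Lr.get ⟨i, hi'⟩ with hr
    have hrL : r ∈ Lr := List.get_mem _ _
    have hrρ : r ∈ ρ := (hmemρ r).mp hrL
    have hrtake : r ∉ Lr.take i := by
      intro hmem
      rw [List.mem_iff_getElem] at hmem
      obtain ⟨j, hj, hget⟩ := hmem
      rw [List.length_take] at hj
      have hji : j < i := lt_of_lt_of_le hj (min_le_left _ _)
      rw [List.getElem_take] at hget
      have := (List.Nodup.getElem_inj_iff hnodup).mp hget
      omega
    have hgetmap : (Lr.map (fun r => insert r β)).get ⟨i, hi⟩ = insert r β := by
      simp [hr]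
    have htakemap : (Lr.map (fun r => insert r β)).take i
        = (Lr.take i).map (fun r => insert r β) := by
      rw [List.map_take]
    rw [hgetmap, htakemap]
    constructor
    · rw [hinscard r hrρ]
    · -- τ = S \ (Lr.take i).toFinset
      refine ⟨S \ (Lr.take i).toFinset, ?_, ?_, ?_, ?_⟩
      · rw [hKmem]
        constructor
        · intro x hx
          rcases Finset.mem_insert.mp hx with h | h
          · exact Finset.mem_union_right _ (h ▸ hrρ)
          · exact Finset.mem_union_left _ (hβι h)
        · intro r' hr' hsub
          have hr'mem : r' ∈ insert r β := hsub (Finset.mem_insert_self _ _)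
          rcases Finset.mem_insert.mp hr'mem with h | h
          · exact hrtake (h ▸ hr')
          · exact hrβ r' ((hmemρ r').mp (List.mem_of_mem_take hr')) h
      · rw [hKmem]
        refine ⟨Finset.sdiff_subset, ?_⟩
        intro r' hr' hsub
        have : r' ∈ S \ (Lr.take i).toFinset := hsub (Finset.mem_insert_self _ _)
        exact (Finset.mem_sdiff.mp this).2 (List.mem_toFinset.mpr hr')
      · intro x hx
        rw [Finset.mem_sdiff]
        rcases Finset.mem_insert.mp hx with h | h
        · subst h
          exact ⟨Finset.mem_union_right _ hrρ, fun hc => hrtake (List.mem_toFinset.mp hc)⟩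
        · refine ⟨Finset.mem_union_left _ (hβι h), fun hc => ?_⟩
          have : x ∈ ρ := (hmemρ x).mp (List.mem_of_mem_take (List.mem_toFinset.mp hc))
          exact hrβ x this h
      · intro η hη hsub
        rw [hKmem] at hη
        intro x hx
        rw [Finset.mem_sdiff]
        refine ⟨hη.1 hx, fun hc => ?_⟩
        have hxtake : x ∈ Lr.take i := List.mem_toFinset.mp hc
        apply hη.2 x hxtake
        intro y hy
        rcases Finset.mem_insert.mp hy with h | h
        · exact h ▸ hx
        · exact hsub (Finset.mem_insert_of_mem h)
  -- the final complex
  have hfinal : collapseList S.powerset (Lr.map (fun r => insert r β))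
      = S.powerset.filter (fun σ => β ⊆ σ → σ ⊆ ι) := by
    rw [collapseList_filter]
    apply Finset.filter_congr
    intro η hη
    rw [Finset.mem_powerset] at hη
    simp only [List.mem_map]
    constructor
    · intro h hβη x hx
      by_contra hxι
      rcases Finset.mem_union.mp (hη hx) with h' | h'
      · exact hxι h'
      · refine h (insert x β) ⟨x, (hmemρ x).mpr h', rfl⟩ ?_
        intro y hy
        rcases Finset.mem_insert.mp hy with h'' | h''
        · exact h'' ▸ hx
        · exact hβη h''
    · rintro h σ ⟨r, hrL, rfl⟩ hsub
      have hrρ : r ∈ ρ := (hmemρ r).mp hrL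
      have hβη : β ⊆ η := fun y hy => hsub (Finset.mem_insert_of_mem hy)
      have : r ∈ ι := h hβη (hsub (Finset.mem_insert_self _ _))
      exact Finset.disjoint_left.mp hdisj this hrρ
  exact ⟨hseq, hfinal, hfinal ▸ collapsesTo_of_seq d _ _ hseq⟩
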